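/- The bicyclic monoid B, presented by ⟨a, b | a*b = 1⟩, is not an LWF semigroup. -/

import Mathlib

namespace Stmt14

/-- A semigroup `S` is LWF (locally wrapped by the class of finite semigroups) if for every
finite subset `H` of `S` there exist a finite semigroup `D` and a function `d : D → S` such
that `H ⊆ d(D)` and `d (x' * y') = d x' * d y'` whenever `d x', d y' ∈ H`. -/
def IsLWF (S : Type*) [Semigroup S] : Prop :=
  ∀ H : Finset S, ∃ (D : Type) (_ : Semigroup D) (_ : Fintype D) (d : D → S),
    (↑H ⊆ Set.range d) ∧
      ∀ x' y' : D, d x' ∈ H → d y' ∈ H → d (x' * y') = d x' * d y'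

/-- The generator `a` of the free monoid on two generators. -/
def a : FreeMonoid (Fin 2) := FreeMonoid.of 0

/-- The generator `b` of the free monoid on two generators. -/
def b : FreeMonoid (Fin 2) := FreeMonoid.of 1

/-- The defining relation `a * b = 1`. -/
def rel : FreeMonoid (Fin 2) → FreeMonoid (Fin 2) → Prop :=
  fun x y => x = a * b ∧ y = 1

/-- The bicyclic monoid `B = ⟨a, b ∣ ab = 1⟩`. -/
def B : Type := (conGen rel).Quotient

instance : Monoid B := Con.monoid _

/-! ### Auxiliary facts about the bicyclic monoid -/

/-- The canonical projection onto the bicyclic monoid. -/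
def toB : FreeMonoid (Fin 2) →* B := Con.mk' _

lemma hab : toB a * toB b = 1 := by
  rw [← map_mul, ← map_one toB]
  exact (Con.eq _).mpr (ConGen.Rel.of _ _ ⟨rfl, rfl⟩)

/-- Interpretation of the generators as maps `ℕ → ℕ`. -/
def e : Fin 2 → Function.End ℕ := ![Nat.pred, Nat.succ]

def phi : FreeMonoid (Fin 2) →* Function.End ℕ := FreeMonoid.lift e

lemma hker : conGen rel ≤ Con.ker phi := by
  apply Con.conGen_le.mpr
  rintro x y ⟨hx, hy⟩
  subst hx; subst hy
  show phi (a * b) = phi 1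
  rw [map_mul, map_one]
  show phi a * phi b = 1
  have ha : phi a = Nat.pred := FreeMonoid.lift_eval_of e 0
  have hb : phi b = Nat.succ := FreeMonoid.lift_eval_of e 1
  rw [ha, hb]
  funext n
  rfl

lemma hba : toB b * toB a ≠ 1 := by
  intro h
  rw [← map_mul, ← map_one toB] at h
  have h2 : conGen rel (b * a) 1 := (Con.eq _).mp h
  have h3 : phi (b * a) = phi 1 := hker h2
  have ha : phi a = Nat.pred := FreeMonoid.lift_eval_of e 0
  have hb : phi b = Nat.succ := FreeMonoid.lift_eval_of e 1
  rw [map_mul, map_one, ha, hb] at h3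
  change (Nat.succ ∘ Nat.pred : ℕ → ℕ) = id at h3
  have h4 := congrFun h3 0
  simp at h4

/-! ### Auxiliary facts about finite semigroups -/

/-- `pw t n = t^(n+1)` in a semigroup. -/
def pw {D : Type*} [Semigroup D] (t : D) : ℕ → D
  | 0 => t
  | n+1 => pw t n * t

lemma pw_add {D : Type*} [Semigroup D] (t : D) (i j : ℕ) :
    pw t i * pw t j = pw t (i + j + 1) := by
  induction j with
  | zero => rfl
  | succ j ih =>
    show pw t i * (pw t j * t) = pw t (i + j + 1) * t
    rw [← mul_assoc, ih]

lemma pw_shift {D : Type*} [Semigroup D] {t : D} {i k : ℕ}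
    (h : pw t (i + k) = pw t i) : ∀ s, pw t (i + s + k) = pw t (i + s) := by
  intro s
  cases s with
  | zero => simpa using h
  | succ s =>
    have h1 : pw t (i + k) * pw t s = pw t (i + k + s + 1) := pw_add t _ _
    rw [h, pw_add t i s] at h1
    rw [show i + (s+1) + k = i + k + s + 1 by omega, show i + (s+1) = i + s + 1 by omega]
    exact h1.symm

lemma pw_period {D : Type*} [Semigroup D] {t : D} {i k : ℕ}
    (h : pw t (i + k) = pw t i) : ∀ r s, pw t (i + s + r * k) = pw t (i + s) := by
  intro r
  induction r with
  | zero => intro s; simp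
  | succ r ih =>
    intro s
    rw [show i + s + (r+1) * k = i + (s + r * k) + k by ring, pw_shift h (s + r * k),
      ← add_assoc, ih s]

/-- Every element of a finite semigroup has an idempotent positive power. -/
lemma exists_idem {D : Type*} [Semigroup D] [Finite D] (t : D) :
    ∃ m, pw t m * pw t m = pw t m := by
  obtain ⟨i0, j0, hne, heq⟩ := Finite.exists_ne_map_eq_of_infinite (pw t)
  have key : ∃ i k', pw t (i + (k'+1)) = pw t i := by
    rcases hne.lt_or_gt with h | h
    · exact ⟨i0, j0 - i0 - 1, by rw [show i0 + (j0-i0-1+1) = j0 by omega]; exact heq.symm⟩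
    · exact ⟨j0, i0 - j0 - 1, by rw [show j0 + (i0-j0-1+1) = i0 by omega]; exact heq⟩
  obtain ⟨i, k', hper0⟩ := key
  refine ⟨i + (i*k' + k'), ?_⟩
  have h1 : pw t (i + (i*k'+k')) * pw t (i + (i*k'+k')) =
      pw t ((i + (i*k'+k')) + (i + (i*k'+k')) + 1) := pw_add t _ _
  have h2 : (i + (i*k'+k')) + (i + (i*k'+k')) + 1 = i + (i*k'+k') + (i+1) * (k'+1) := by ring
  rw [h1, h2, pw_period hper0 (i+1) (i*k'+k')]

/-- One step of the refinement: an idempotent power of `U*V`. -/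
noncomputable def fstep {D : Type*} [Semigroup D] [Finite D] (p : D × D × D) : D :=
  pw (p.2.1 * p.2.2) (Classical.choose (exists_idem (p.2.1 * p.2.2)))

noncomputable def step {D : Type*} [Semigroup D] [Finite D] (p : D × D × D) : D × D × D :=
  (fstep p, fstep p * p.2.1 * fstep p, fstep p * p.2.2 * fstep p)

lemma fstep_idem {D : Type*} [Semigroup D] [Finite D] (p : D × D × D) :
    fstep p * fstep p = fstep p := Classical.choose_spec (exists_idem _)

/-- Absorption of powers. -/
lemma habs {D : Type*} [Semigroup D] (f C : D) (h1 : f * C = C) (h2 : C * f = C) :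
    ∀ m, f * pw C m = pw C m ∧ pw C m * f = pw C m := by
  intro m
  induction m with
  | zero => exact ⟨h1, h2⟩
  | succ m ih =>
    constructor
    · show f * (pw C m * C) = pw C m * C
      rw [← mul_assoc, ih.1]
    · show (pw C m * C) * f = pw C m * C
      rw [mul_assoc, h2]

def Inv {D : Type*} [Semigroup D] {S : Type*} [Monoid S] (d : D → S) (A Bb : S)
    (p : D × D × D) : Prop :=
  p.1 * p.1 = p.1 ∧ d p.1 = 1 ∧ d p.2.1 = A ∧ d p.2.2 = Bb ∧
  p.1 * p.2.1 = p.2.1 ∧ p.2.1 * p.1 = p.2.1 ∧ p.1 * p.2.2 = p.2.2 ∧ p.2.2 * p.1 = p.2.2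

/-- The key fact: if a finite semigroup `D` wraps a set `H` containing `1`, `A`, `Bb`
with `A * Bb = 1`, then `Bb * A = 1`. -/
lemma key {D : Type*} [Semigroup D] [Finite D] {S : Type*} [Monoid S]
    (d : D → S) (H : Finset S) (A Bb : S)
    (hm1 : (1:S) ∈ H) (hmA : A ∈ H) (hmB : Bb ∈ H)
    (hAB : A * Bb = 1)
    (hmul : ∀ p q : D, d p ∈ H → d q ∈ H → d (p*q) = d p * d q)
    (x y : D) (hx : d x = A) (hy : d y = Bb) : Bb * A = 1 := by
  classical
  -- powers of elements of value 1 have value 1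
  have hpow1 : ∀ C : D, d C = 1 → ∀ n, d (pw C n) = 1 := by
    intro C hC n
    induction n with
    | zero => exact hC
    | succ n ih =>
      show d (pw C n * C) = 1
      rw [hmul _ _ (by rw [ih]; exact hm1) (by rw [hC]; exact hm1), ih, hC, one_mul]
  -- building invariant triples
  have hmkInv : ∀ (f U V : D), f * f = f → d f = 1 → d U = A → d V = Bb →
      Inv d A Bb (f, f * U * f, f * V * f) := by
    intro f U V hff hdf hdU hdV
    have hdfU : d (f * U) = A := by
      rw [hmul f U (by rw [hdf]; exact hm1) (by rw [hdU]; exact hmA), hdf, hdU, one_mul]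
    have hdfUf : d (f * U * f) = A := by
      rw [hmul (f*U) f (by rw [hdfU]; exact hmA) (by rw [hdf]; exact hm1), hdfU, hdf, mul_one]
    have hdfV : d (f * V) = Bb := by
      rw [hmul f V (by rw [hdf]; exact hm1) (by rw [hdV]; exact hmB), hdf, hdV, one_mul]
    have hdfVf : d (f * V * f) = Bb := by
      rw [hmul (f*V) f (by rw [hdfV]; exact hmB) (by rw [hdf]; exact hm1), hdfV, hdf, mul_one]
    refine ⟨hff, hdf, hdfUf, hdfVf, ?_, ?_, ?_, ?_⟩
    · show f * (f * U * f) = f * U * f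
      simp only [← mul_assoc]; rw [hff]
    · show (f * U * f) * f = f * U * f
      rw [mul_assoc, hff]
    · show f * (f * V * f) = f * V * f
      simp only [← mul_assoc]; rw [hff]
    · show (f * V * f) * f = f * V * f
      rw [mul_assoc, hff]
  -- the step preserves the invariant
  have hdCof : ∀ p : D × D × D, Inv d A Bb p → d (p.2.1 * p.2.2) = 1 := by
    intro p hp
    obtain ⟨_, _, hdU, hdV, _, _, _, _⟩ := hp
    rw [hmul _ _ (by rw [hdU]; exact hmA) (by rw [hdV]; exact hmB), hdU, hdV, hAB]
  have hstepInv : ∀ p : D × D × D, Inv d A Bb p → Inv d A Bb (step p) := by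
    intro p hp
    have hdC := hdCof p hp
    obtain ⟨_, _, hdU, hdV, _, _, _, _⟩ := hp
    exact hmkInv _ _ _ (fstep_idem p) (hpow1 _ hdC _) hdU hdV
  -- the step descends in the idempotent order
  have hstepLe : ∀ p : D × D × D, Inv d A Bb p →
      (p.1 * fstep p = fstep p ∧ fstep p * p.1 = fstep p) := by
    intro p hp
    obtain ⟨hff, _, _, _, h5, h6, h7, h8⟩ := hp
    have hfC : p.1 * (p.2.1 * p.2.2) = p.2.1 * p.2.2 := by rw [← mul_assoc, h5]
    have hCf : (p.2.1 * p.2.2) * p.1 = p.2.1 * p.2.2 := by rw [mul_assoc, h8]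
    exact ⟨(habs _ _ hfC hCf _).1, (habs _ _ hfC hCf _).2⟩
  -- the sequence
  set f0 : D := fstep (x, x, y) with hf0
  set F : ℕ → D × D × D := fun n => step^[n] (f0, f0 * x * f0, f0 * y * f0) with hF
  have hdxy : d (x * y) = 1 := by
    rw [hmul _ _ (by rw [hx]; exact hmA) (by rw [hy]; exact hmB), hx, hy, hAB]
  have hdf0 : d f0 = 1 := hpow1 _ hdxy _
  have hInvF : ∀ n, Inv d A Bb (F n) := by
    intro n
    induction n with
    | zero =>
      show Inv d A Bb (f0, f0 * x * f0, f0 * y * f0)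
      exact hmkInv f0 x y (fstep_idem _) hdf0 hx hy
    | succ n ih =>
      have : F (n+1) = step (F n) := Function.iterate_succ_apply' step n _
      rw [this]
      exact hstepInv _ ih
  have hchain : ∀ n, ((F n).1 * (F (n+1)).1 = (F (n+1)).1 ∧
      (F (n+1)).1 * (F n).1 = (F (n+1)).1) := by
    intro n
    have h1 : F (n+1) = step (F n) := Function.iterate_succ_apply' step n _
    rw [h1]
    exact hstepLe _ (hInvF n)
  -- transitivity of the chain
  have htrans : ∀ n m, ((F n).1 * (F (n+m)).1 = (F (n+m)).1 ∧
      (F (n+m)).1 * (F n).1 = (F (n+m)).1) := by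
    intro n m
    induction m with
    | zero => exact ⟨(hInvF n).1, (hInvF n).1⟩
    | succ m ih =>
      have hc := hchain (n+m)
      constructor
      · have h : (F n).1 * ((F (n+m)).1 * (F (n+m+1)).1) = (F (n+m)).1 * (F (n+m+1)).1 := by
          rw [← mul_assoc, ih.1]
        rw [hc.1] at h
        rw [show n + (m+1) = n + m + 1 by omega]
        exact h
      · have h : ((F (n+m+1)).1 * (F (n+m)).1) * (F n).1 = (F (n+m+1)).1 * (F (n+m)).1 := by
          rw [mul_assoc, ih.2]
        rw [hc.2] at h
        rw [show n + (m+1) = n + m + 1 by omega]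
        exact h
  -- pigeonhole: the chain of idempotents stabilizes
  obtain ⟨i0, j0, hne, heqf⟩ := Finite.exists_ne_map_eq_of_infinite (fun n => (F n).1)
  have hstab : ∃ i, (F (i+1)).1 = (F i).1 := by
    have hx2 : ∃ i j, i < j ∧ (F i).1 = (F j).1 := by
      rcases hne.lt_or_gt with h | h
      · exact ⟨i0, j0, h, heqf⟩
      · exact ⟨j0, i0, h, heqf.symm⟩
    obtain ⟨i, j, hij, hfij⟩ := hx2
    refine ⟨i, ?_⟩
    have h1 := hchain i
    have h2 := htrans (i+1) (j - (i+1))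
    rw [show i + 1 + (j - (i+1)) = j by omega] at h2
    rw [← hfij] at h2
    calc (F (i+1)).1 = (F (i+1)).1 * (F i).1 := h1.2.symm
      _ = (F i).1 := h2.1
  obtain ⟨i, hstabi⟩ := hstab
  -- extract data at the stabilization point
  have hInv := hInvF i
  obtain ⟨hff, hdf, hdU, hdV, hfU, hUf, hfV, hVf⟩ := hInv
  set f := (F i).1 with hfdef
  set U := (F i).2.1 with hUdef
  set V := (F i).2.2 with hVdef
  set C := U * V with hCdef
  set m := Classical.choose (exists_idem C) with hmdef
  have hstep1 : (F (i+1)).1 = pw C m := by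
    rw [show F (i+1) = step (F i) from Function.iterate_succ_apply' step i _]
    rfl
  have hfpw : pw C m = f := by rw [← hstep1]; exact hstabi
  have hdC : d C = 1 := by
    rw [hmul _ _ (by rw [hdU]; exact hmA) (by rw [hdV]; exact hmB), hdU, hdV, hAB]
  have hf2 : f = pw C (m + m + 1) := by
    calc f = f * f := hff.symm
      _ = pw C m * pw C m := by rw [hfpw]
      _ = pw C (m + m + 1) := pw_add C m m
  set Z := V * pw C (m + m) with hZdef
  have hUZ : U * Z = f := by
    calc U * (V * pw C (m+m)) = (U * V) * pw C (m+m) := (mul_assoc _ _ _).symm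
      _ = pw C 0 * pw C (m+m) := rfl
      _ = pw C (0 + (m+m) + 1) := pw_add _ _ _
      _ = pw C (m + m + 1) := by rw [show 0 + (m+m) + 1 = m+m+1 by omega]
      _ = f := hf2.symm
  have hfZ : f * Z = Z := by rw [hZdef, ← mul_assoc, hfV]
  have hdZ : d Z = Bb := by
    rw [hmul V _ (by rw [hdV]; exact hmB) (by rw [hpow1 C hdC (m+m)]; exact hm1),
      hdV, hpow1 C hdC (m+m), mul_one]
  -- the finiteness (surjective implies injective) argument
  let T := {t : D // f * t = t ∧ t * f = t}
  let φ : T → T := fun t => ⟨U * t.1, by rw [← mul_assoc, hfU], by rw [mul_assoc, t.2.2]⟩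
  have hsurj : Function.Surjective φ := by
    intro s
    refine ⟨⟨Z * s.1, by rw [← mul_assoc, hfZ], by rw [mul_assoc, s.2.2]⟩, ?_⟩
    apply Subtype.ext
    show U * (Z * s.1) = s.1
    rw [← mul_assoc, hUZ, s.2.1]
  have hinj : Function.Injective φ := Finite.injective_iff_surjective.mpr hsurj
  have hZU1 : f * (Z * U) = Z * U := by rw [← mul_assoc, hfZ]
  have hZU2 : (Z * U) * f = Z * U := by rw [mul_assoc, hUf]
  have heqφ : φ ⟨Z * U, hZU1, hZU2⟩ = φ ⟨f, hff, hff⟩ := by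
    apply Subtype.ext
    show U * (Z * U) = U * f
    rw [← mul_assoc, hUZ, hfU, hUf]
  have hZU : Z * U = f := congrArg Subtype.val (hinj heqφ)
  have hfinal : d (Z * U) = Bb * A := by
    rw [hmul Z U (by rw [hdZ]; exact hmB) (by rw [hdU]; exact hmA), hdZ, hdU]
  rw [hZU, hdf] at hfinal
  exact hfinal.symm

/-- The bicyclic monoid `B = ⟨a, b ∣ ab = 1⟩` is not an LWF semigroup. -/
theorem bicyclic_not_isLWF : ¬ IsLWF B := by
  classical
  intro h
  obtain ⟨D, sg, ft, d, hsub, hmul⟩ := h ({1, toB a, toB b} : Finset B)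
  obtain ⟨x, hx⟩ := hsub (show (toB a : B) ∈ _ by simp)
  obtain ⟨y, hy⟩ := hsub (show (toB b : B) ∈ _ by simp)
  exact hba (@key D sg (@Finite.of_fintype D ft) B _ d ({1, toB a, toB b} : Finset B)
    (toB a) (toB b) (by simp) (by simp) (by simp) hab hmul x y hx hy)

end Stmt14
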